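/- Let T_k: H → H be α_k-averaged with α_k ∈ (0,1], C = ∩_k Fix T_k ≠ ∅, λ_k ∈ (0, 1/α_k), and x_{k+1} = (1−λ_k)x_k + λ_k T_k x_k. Suppose each Id − T_k is metrically subregular at a common point x̄ ∈ C for 0 with constant γ_k on B[x̄;δ_k], δ := inf_k δ_k > 0, x_0 ∈ B[x̄;δ]. Then for all k: x_k ∈ B[x̄;δ] and d(x_{k+1}, Fix T_k) ≤ ρ_k d(x_k, Fix T_k), where ρ_k = (1 − λ_k(1−λ_k α_k)/(α_k γ_k²))^{1/2}. -/

import Mathlib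

variable {H : Type*} [NormedAddCommGroup H] [InnerProductSpace ℝ H] [CompleteSpace H]

/-- An operator is nonexpansive if it is 1-Lipschitz. -/
def Nonexpansive (T : H → H) : Prop := ∀ x y : H, ‖T x - T y‖ ≤ ‖x - y‖

/-- `T` is `α`-averaged: `T = (1-α)•Id + α•R` for some nonexpansive `R`. -/
def Averaged (α : ℝ) (T : H → H) : Prop :=
  ∃ R : H → H, Nonexpansive R ∧ ∀ x : H, T x = (1 - α) • x + α • R x

/-- A set-valued operator is monotone. -/
def MonotoneOp (A : H → Set H) : Prop :=
  ∀ x u y v : H, u ∈ A x → v ∈ A y → (0 : ℝ) ≤ inner ℝ (x - y) (u - v)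

/-- Maximal monotonicity. -/
def MaxMonotone (A : H → Set H) : Prop :=
  MonotoneOp A ∧ ∀ x u : H, (∀ y v : H, v ∈ A y → (0 : ℝ) ≤ inner ℝ (x - y) (u - v)) → u ∈ A x

/-- `J` is the resolvent of `γ • A`, i.e. `J = (Id + γA)⁻¹`:
for every `x`, `(1/γ)(x - J x) ∈ A (J x)` (so `x ∈ (Id + γA)(J x)`). -/
def IsResolvent (γ : ℝ) (A : H → Set H) (J : H → H) : Prop :=
  ∀ x : H, γ⁻¹ • (x - J x) ∈ A (J x)

/-- Weak convergence of a sequence in a Hilbert space. -/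
def WeakConv (y : ℕ → H) (p : H) : Prop :=
  ∀ u : H, Filter.Tendsto (fun k => (inner ℝ (y k) u : ℝ)) Filter.atTop (nhds (inner ℝ p u))

lemma comb_norm_sq (t : ℝ) (a b : H) :
    ‖(1 - t) • a + t • b‖ ^ 2 =
      (1 - t) * ‖a‖ ^ 2 + t * ‖b‖ ^ 2 - t * (1 - t) * ‖a - b‖ ^ 2 := by
  have h : ∀ v : H, ‖v‖ ^ 2 = inner ℝ v v := fun v => (real_inner_self_eq_norm_sq v).symm
  simp only [h, inner_add_left, inner_add_right, inner_sub_left, inner_sub_right,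
    real_inner_smul_left, real_inner_smul_right, real_inner_comm a b]
  ring

lemma key_ineq (a l : ℝ) (ha0 : 0 < a) (hl0 : 0 < l)
    (T : H → H) (hT : Averaged a T) (z xx : H) (hz : T z = z) :
    ‖((1 - l) • xx + l • T xx) - z‖ ^ 2 + (l * (1 - l * a) / a) * ‖xx - T xx‖ ^ 2
      ≤ ‖xx - z‖ ^ 2 := by
  obtain ⟨R, hR, hTf⟩ := hT
  have hRz : R z = z := by
    have h := hTf z
    rw [hz] at h
    have h1 : a • R z = a • z := by
      have h2 : a • R z - a • z = ((1 - a) • z + a • R z) - z := by module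
      rw [← h, sub_self] at h2
      exact sub_eq_zero.mp h2
    exact smul_right_injective H (ne_of_gt ha0) h1
  have hcomb : ((1 - l) • xx + l • T xx) - z
      = (1 - l * a) • (xx - z) + (l * a) • (R xx - z) := by
    rw [hTf xx]; module
  have hxT : xx - T xx = a • (xx - R xx) := by rw [hTf xx]; module
  have hb : ‖R xx - z‖ ≤ ‖xx - z‖ := by
    have := hR xx z; rwa [hRz] at this
  have hb2 : ‖R xx - z‖ ^ 2 ≤ ‖xx - z‖ ^ 2 := pow_le_pow_left₀ (norm_nonneg _) hb 2
  have hnT : ‖xx - T xx‖ ^ 2 = a ^ 2 * ‖xx - R xx‖ ^ 2 := by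
    rw [hxT, norm_smul, Real.norm_eq_abs, abs_of_pos ha0]; ring
  rw [hcomb, comb_norm_sq, hnT]
  have hd : (xx - z) - (R xx - z) = xx - R xx := by module
  rw [hd]
  have hc : (l * (1 - l * a) / a) * (a ^ 2 * ‖xx - R xx‖ ^ 2)
      = (l * a) * (1 - l * a) * ‖xx - R xx‖ ^ 2 := by
    field_simp
  have h5 : l * a * ‖R xx - z‖ ^ 2 ≤ l * a * ‖xx - z‖ ^ 2 :=
    mul_le_mul_of_nonneg_left hb2 (by positivity)
  linarith [hc, h5]

theorem stmt17 (α : ℕ → ℝ) (hα0 : ∀ k, 0 < α k) (hα1 : ∀ k, α k ≤ 1)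
    (T : ℕ → H → H) (hT : ∀ k, Averaged (α k) (T k))
    (xb : H) (hxb : ∀ k, T k xb = xb)
    (lam : ℕ → ℝ) (hlam0 : ∀ k, 0 < lam k) (hlam1 : ∀ k, lam k < 1 / α k)
    (x : ℕ → H) (hx : ∀ k, x (k + 1) = (1 - lam k) • x k + lam k • T k (x k))
    (γ δk : ℕ → ℝ) (hγ : ∀ k, 0 < γ k) (hδk : ∀ k, 0 < δk k)
    (hsub : ∀ k, ∀ z : H, ‖z - xb‖ ≤ δk k →
      Metric.infDist z {w : H | T k w = w} ≤ γ k * ‖z - T k z‖)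
    (δ : ℝ) (hδ0 : 0 < δ) (hδinf : ∀ k, δ ≤ δk k)
    (hx0 : ‖x 0 - xb‖ ≤ δ) :
    ∀ k : ℕ, ‖x k - xb‖ ≤ δ ∧
      Metric.infDist (x (k + 1)) {w : H | T k w = w} ≤
        Real.sqrt (1 - lam k * (1 - lam k * α k) / (α k * (γ k) ^ 2)) *
          Metric.infDist (x k) {w : H | T k w = w} := by
  have hla1 : ∀ k, lam k * α k < 1 := fun k => by
    have h := hlam1 k
    rw [lt_div_iff₀ (hα0 k)] at h
    exact h
  have hc0 : ∀ k, 0 ≤ lam k * (1 - lam k * α k) / α k := fun k =>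
    div_nonneg (mul_nonneg (hlam0 k).le (by linarith [hla1 k])) (hα0 k).le
  have hfej : ∀ k, ‖x (k + 1) - xb‖ ≤ ‖x k - xb‖ := by
    intro k
    have hk := key_ineq (α k) (lam k) (hα0 k) (hlam0 k) (T k) (hT k) xb (x k) (hxb k)
    rw [← hx k] at hk
    have hcn : 0 ≤ (lam k * (1 - lam k * α k) / α k) * ‖x k - T k (x k)‖ ^ 2 :=
      mul_nonneg (hc0 k) (sq_nonneg _)
    nlinarith [norm_nonneg (x (k + 1) - xb), norm_nonneg (x k - xb)]
  have hball : ∀ k, ‖x k - xb‖ ≤ δ := by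
    intro k
    induction k with
    | zero => exact hx0
    | succ n ih => exact le_trans (hfej n) ih
  intro k
  refine ⟨hball k, ?_⟩
  have hFne : ({w : H | T k w = w} : Set H).Nonempty := ⟨xb, hxb k⟩
  set F := {w : H | T k w = w} with hF
  set d0 := Metric.infDist (x k) F with hd0def
  set d1 := Metric.infDist (x (k + 1)) F with hd1def
  have hd0 : 0 ≤ d0 := Metric.infDist_nonneg
  have hd1 : 0 ≤ d1 := Metric.infDist_nonneg
  set c := lam k * (1 - lam k * α k) / α k with hcdef
  have step1 : d1 ^ 2 + c * ‖x k - T k (x k)‖ ^ 2 ≤ d0 ^ 2 := by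
    refine le_of_forall_pos_le_add ?_
    intro ε hε
    set ε' := min 1 (ε / (2 * d0 + 1)) with hε'def
    have hε'0 : 0 < ε' := lt_min one_pos (div_pos hε (by linarith))
    obtain ⟨z, hzF, hzd⟩ := (Metric.infDist_lt_iff hFne).mp
      (show Metric.infDist (x k) F < d0 + ε' by rw [← hd0def]; linarith)
    have hk := key_ineq (α k) (lam k) (hα0 k) (hlam0 k) (T k) (hT k) z (x k) hzF
    rw [← hx k] at hk
    have h1 : d1 ≤ ‖x (k + 1) - z‖ := by
      have := Metric.infDist_le_dist_of_mem (x := x (k + 1)) hzF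
      rwa [dist_eq_norm] at this
    have h2 : ‖x k - z‖ < d0 + ε' := by rwa [dist_eq_norm] at hzd
    have h3 : d1 ^ 2 ≤ ‖x (k + 1) - z‖ ^ 2 := pow_le_pow_left₀ hd1 h1 2
    have h4 : ‖x k - z‖ ^ 2 ≤ (d0 + ε') ^ 2 :=
      pow_le_pow_left₀ (norm_nonneg _) h2.le 2
    have h5 : ε' ≤ 1 := min_le_left _ _
    have h6 : ε' * (2 * d0 + 1) ≤ ε := by
      have h7 : ε' ≤ ε / (2 * d0 + 1) := min_le_right _ _
      rw [le_div_iff₀ (by linarith : (0:ℝ) < 2 * d0 + 1)] at h7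
      exact h7
    nlinarith [hε'0]
  have step2 : d0 ≤ γ k * ‖x k - T k (x k)‖ :=
    hsub k (x k) (le_trans (hball k) (hδinf k))
  set ρ2 := 1 - lam k * (1 - lam k * α k) / (α k * (γ k) ^ 2) with hρ2
  clear_value ρ2
  have hγ2 : (0:ℝ) < (γ k) ^ 2 := pow_pos (hγ k) 2
  have hkey : d1 ^ 2 ≤ ρ2 * d0 ^ 2 := by
    have h7 : d0 ^ 2 ≤ (γ k) ^ 2 * ‖x k - T k (x k)‖ ^ 2 := by
      nlinarith [norm_nonneg (x k - T k (x k)), hd0]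
    have h8 : c / (γ k) ^ 2 * d0 ^ 2 ≤ c * ‖x k - T k (x k)‖ ^ 2 := by
      have h9 := mul_le_mul_of_nonneg_left h7 (div_nonneg (hc0 k) hγ2.le)
      calc c / (γ k) ^ 2 * d0 ^ 2
          ≤ c / (γ k) ^ 2 * ((γ k) ^ 2 * ‖x k - T k (x k)‖ ^ 2) := h9
        _ = c * ‖x k - T k (x k)‖ ^ 2 := by rw [← mul_assoc, div_mul_cancel₀ _ hγ2.ne']
    have h10 : ρ2 * d0 ^ 2 = d0 ^ 2 - c / (γ k) ^ 2 * d0 ^ 2 := by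
      rw [hρ2, hcdef]
      field_simp
    rw [h10]
    linarith [step1, h8]
  rcases le_or_gt 0 ρ2 with h | h
  · have h11 : d1 ≤ Real.sqrt (ρ2 * d0 ^ 2) := by
      rw [← Real.sqrt_sq hd1]
      exact Real.sqrt_le_sqrt hkey
    rwa [Real.sqrt_mul h, Real.sqrt_sq hd0] at h11
  · have hd00 : d0 = 0 := by
      by_contra hne
      have hpos : 0 < d0 := lt_of_le_of_ne hd0 (Ne.symm hne)
      have hneg : ρ2 * d0 ^ 2 < 0 := mul_neg_of_neg_of_pos h (by positivity)
      nlinarith [sq_nonneg d1]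
    have hd10 : d1 = 0 := by
      rw [hd00] at hkey
      nlinarith [hd1]
    rw [hd00, hd10, mul_zero]
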